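/- If w : ℝ → ℝ is a twice continuously differentiable strictly positive solution of w''(y) − w(y) + w(y)² = 0 on ℝ with w'(0) = 0 and w(y) → 0 as y → ±∞, then w(y) = (3/2) sech²(y/2) for all y ∈ ℝ. -/

import Mathlib

open Real Filter

noncomputable def myrho (y : ℝ) : ℝ := (3/2) * (1 / Real.cosh (y/2))^2
noncomputable def myrho' (y : ℝ) : ℝ := -(3/2) * Real.sinh (y/2) / Real.cosh (y/2)^3

lemma hdc (y : ℝ) : HasDerivAt (fun y : ℝ => Real.cosh (y/2)) (Real.sinh (y/2) * (1/2)) y :=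
  ((hasDerivAt_id y).div_const 2).cosh

lemma hds (y : ℝ) : HasDerivAt (fun y : ℝ => Real.sinh (y/2)) (Real.cosh (y/2) * (1/2)) y :=
  ((hasDerivAt_id y).div_const 2).sinh

lemma hasDerivAt_myrho (y : ℝ) : HasDerivAt myrho (myrho' y) y := by
  have hc : (0:ℝ) < Real.cosh (y/2) := Real.cosh_pos _
  have h1 : HasDerivAt (fun y : ℝ => (Real.cosh (y/2))⁻¹)
      (-(Real.sinh (y/2) * (1/2)) / (Real.cosh (y/2))^2) y := (hdc y).inv hc.ne'
  have h2 := ((h1.pow 2).const_mul (3/2 : ℝ))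
  have hfun : myrho = fun z : ℝ => (3/2 : ℝ) * (Real.cosh (z/2))⁻¹ ^ 2 := by
    funext z; simp [myrho, one_div]
  rw [hfun]
  refine h2.congr_deriv ?_
  symm
  unfold myrho'
  have hc' : Real.cosh (y/2) ≠ 0 := hc.ne'
  simp only [show (2:ℕ) - 1 = 1 from rfl, pow_one]
  field_simp
  ring

lemma hasDerivAt_myrho' (y : ℝ) : HasDerivAt myrho' (myrho y - (myrho y)^2) y := by
  have hc : (0:ℝ) < Real.cosh (y/2) := Real.cosh_pos _
  have h1 : HasDerivAt (fun y : ℝ => Real.sinh (y/2) / Real.cosh (y/2)^3)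
      ((Real.cosh (y/2) * (1/2) * Real.cosh (y/2)^3 -
        Real.sinh (y/2) * (3 * Real.cosh (y/2)^2 * (Real.sinh (y/2) * (1/2)))) /
        (Real.cosh (y/2)^3)^2) y := (hds y).div ((hdc y).pow 3) (by positivity)
  have h2 := h1.const_mul (-(3/2) : ℝ)
  have hs : Real.sinh (y/2)^2 = Real.cosh (y/2)^2 - 1 := by
    have := Real.cosh_sq_sub_sinh_sq (y/2); linarith
  have hfun : myrho' = fun z : ℝ => (-(3/2) : ℝ) * (Real.sinh (z/2) / Real.cosh (z/2)^3) := by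
    funext z; unfold myrho'; ring
  rw [hfun]
  refine h2.congr_deriv ?_
  symm
  unfold myrho
  have hc' : Real.cosh (y/2) ≠ 0 := hc.ne'
  field_simp
  linear_combination (-3 : ℝ) * hs

lemma myrho_bound (y : ℝ) : |myrho y| ≤ 3/2 ∧ |myrho' y| ≤ 3/2 := by
  have hc : (0:ℝ) < Real.cosh (y/2) := Real.cosh_pos _
  have hc1 := Real.one_le_cosh (y/2)
  have hs : |Real.sinh (y/2)| ≤ Real.cosh (y/2) := by
    have h := Real.cosh_sq_sub_sinh_sq (y/2)
    rw [abs_le]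
    constructor <;> nlinarith [sq_abs (Real.sinh (y/2)), abs_nonneg (Real.sinh (y/2))]
  constructor
  · rw [abs_le]; unfold myrho
    have h1 : (1 / Real.cosh (y/2))^2 ≤ 1 := by
      have h2 : 1 / Real.cosh (y/2) ≤ 1 := by
        rw [div_le_one hc]; exact hc1
      nlinarith [le_of_lt (one_div_pos.mpr hc)]
    constructor
    · nlinarith [sq_nonneg (1 / Real.cosh (y/2))]
    · nlinarith
  · unfold myrho'
    rw [abs_div, abs_mul]
    have h3 : |(-(3/2) : ℝ)| = 3/2 := by norm_num
    rw [h3, abs_pow, abs_of_pos hc]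
    rw [div_le_iff₀ (by positivity)]
    have hcc : Real.cosh (y/2) ≤ Real.cosh (y/2)^3 := by nlinarith [sq_nonneg (Real.cosh (y/2) - 1), sq_nonneg (Real.cosh (y/2) + 1)]
    nlinarith [abs_nonneg (Real.sinh (y/2))]

/-- Uniqueness of the positive decaying ground state: any `C²` strictly positive
solution of `w'' − w + w² = 0` on `ℝ` with `w'(0) = 0` decaying at `±∞` equals
`(3/2) sech²(y/2)`. -/
theorem stmt_1 (w : ℝ → ℝ)
    (hw : ContDiff ℝ 2 w)
    (hpos : ∀ y, 0 < w y)
    (hode : ∀ y, deriv (deriv w) y - w y + (w y)^2 = 0)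
    (hw0 : deriv w 0 = 0)
    (htop : Tendsto w atTop (nhds 0))
    (hbot : Tendsto w atBot (nhds 0)) :
    ∀ y : ℝ, w y = (3/2) * (1 / Real.cosh (y/2))^2 := by
  have hw1 : Differentiable ℝ w := hw.differentiable (by norm_num)
  have hdw : ∀ y, HasDerivAt w (deriv w y) y := fun y => (hw1 y).hasDerivAt
  have hwd1 : ContDiff ℝ 1 (deriv w) := by
    have h2 : ContDiff ℝ (1+1) w := by norm_num; exact hw
    exact (contDiff_succ_iff_deriv.mp h2).2.2
  have hw1' : Differentiable ℝ (deriv w) := hwd1.differentiable (by norm_num)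
  have hdw' : ∀ y, HasDerivAt (deriv w) (deriv (deriv w) y) y := fun y => (hw1' y).hasDerivAt
  -- energy
  set E : ℝ → ℝ := fun y => (deriv w y)^2/2 - (w y)^2/2 + (w y)^3/3 with hEdef
  have hE : ∀ y, HasDerivAt E 0 y := by
    intro y
    have h1 : HasDerivAt E
        ((2 * deriv w y ^ 1 * deriv (deriv w) y)/2 - (2 * w y ^ 1 * deriv w y)/2
          + (3 * w y ^ 2 * deriv w y)/3) y :=
      ((((hdw' y).pow 2).div_const 2).sub (((hdw y).pow 2).div_const 2)).add
        (((hdw y).pow 3).div_const 3)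
    convert h1 using 1
    have := hode y
    linear_combination (-(deriv w y)) * this
  have hEc : ∀ y, E y = E 0 := fun y =>
    is_const_of_deriv_eq_zero (fun x => (hE x).differentiableAt) (fun x => (hE x).deriv) y 0
  have hsq : ∀ y, (deriv w y)^2 = 2 * E 0 + (w y)^2 - (2/3)*(w y)^3 := by
    intro y
    have := hEc y
    simp only [hEdef] at this ⊢
    linarith
  -- limit of (deriv w)^2 at top
  have hlim : Tendsto (fun y => (deriv w y)^2) atTop (nhds (2 * E 0)) := by
    have h1 : Tendsto (fun y => 2 * E 0 + (w y)^2 - (2/3)*(w y)^3) atTop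
        (nhds (2 * E 0 + 0^2 - (2/3)*0^3)) :=
      (tendsto_const_nhds.add (htop.pow 2)).sub ((htop.pow 3).const_mul (2/3))
    simp only [funext hsq]
    simpa using h1
  have hE0nonneg : 0 ≤ 2 * E 0 := ge_of_tendsto hlim (Eventually.of_forall fun y => sq_nonneg _)
  have hE0 : E 0 = 0 := by
    by_contra hne
    have hE0pos : 0 < E 0 := lt_of_le_of_ne (by linarith) (Ne.symm hne)
    have hev : ∀ᶠ y in atTop, E 0 < (deriv w y)^2 :=
      hlim.eventually (eventually_gt_nhds (by linarith))
    obtain ⟨Y, hY⟩ := eventually_atTop.mp hev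
    have hne0 : ∀ y, Y ≤ y → deriv w y ≠ 0 := by
      intro y hy h0
      have := hY y hy
      rw [h0] at this
      simp at this
      linarith
    have hcd : Continuous (deriv w) := hwd1.continuous
    rcases lt_trichotomy (deriv w Y) 0 with hneg | hzero | hposY
    · -- deriv w < 0 on [Y, ∞), steep: w → -∞, contradiction with positivity
      have hsign : ∀ y, Y ≤ y → deriv w y < 0 := by
        intro y hy
        by_contra hge
        push_neg at hge
        have hgt : 0 < deriv w y := lt_of_le_of_ne hge (Ne.symm (hne0 y hy))
        have hsub := intermediate_value_Icc hy hcd.continuousOn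
        have h0mem : (0:ℝ) ∈ Set.Icc (deriv w Y) (deriv w y) := ⟨hneg.le, hgt.le⟩
        obtain ⟨c, hc, hc0⟩ := hsub h0mem
        exact hne0 c hc.1 hc0
      set q := Real.sqrt (E 0) with hq
      have hqpos : 0 < q := Real.sqrt_pos.mpr hE0pos
      have hsteep : ∀ y, Y ≤ y → deriv w y < -q := by
        intro y hy
        have h1 := hY y hy
        have h2 := hsign y hy
        nlinarith [Real.sq_sqrt hE0pos.le, Real.sqrt_nonneg (E 0)]
      -- g := w + q * id is antitone on Ici Y
      have hanti : AntitoneOn (fun y => w y + q * y) (Set.Ici Y) := by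
        apply antitoneOn_of_deriv_nonpos (convex_Ici Y)
        · exact (hw1.continuous.add (continuous_const.mul continuous_id)).continuousOn
        · exact ((hw1.add ((differentiable_const q).mul differentiable_id)).differentiableOn
            ).mono interior_subset
        · intro x hx
          rw [interior_Ici] at hx
          have hd : HasDerivAt (fun y => w y + q * y) (deriv w x + q * 1) x :=
            (hdw x).add ((hasDerivAt_id x).const_mul q)
          rw [hd.deriv]
          have := hsteep x (le_of_lt hx)
          linarith
      have hYmem : Y ∈ Set.Ici Y := Set.self_mem_Ici
      set z := Y + (w Y)/q + 1 with hz
      have hzY : Y ≤ z := by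
        have hdivpos : 0 < (w Y)/q := div_pos (hpos Y) hqpos
        rw [hz]
        linarith
      have := hanti hYmem hzY hzY
      have hcancel : q * ((w Y)/q) = w Y := mul_div_cancel₀ _ hqpos.ne'
      have : w z ≤ -q := by
        simp only [hz] at this ⊢
        nlinarith [this, hcancel]
      linarith [hpos z]
    · exact hne0 Y le_rfl hzero
    · -- deriv w > 0 on [Y, ∞): w increasing, contradicts w → 0 with w Y > 0
      have hsign : ∀ y, Y ≤ y → 0 < deriv w y := by
        intro y hy
        by_contra hge
        push_neg at hge
        have hlt : deriv w y < 0 := lt_of_le_of_ne hge (hne0 y hy)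
        have hsub := intermediate_value_Icc' hy hcd.continuousOn
        have h0mem : (0:ℝ) ∈ Set.Icc (deriv w y) (deriv w Y) := ⟨hlt.le, hposY.le⟩
        obtain ⟨c, hc, hc0⟩ := hsub h0mem
        exact hne0 c hc.1 hc0
      have hmono : StrictMonoOn w (Set.Ici Y) := by
        apply strictMonoOn_of_deriv_pos (convex_Ici Y) hw1.continuous.continuousOn
        intro x hx
        rw [interior_Ici] at hx
        exact hsign x (le_of_lt hx)
      have hev2 : ∀ᶠ y in atTop, w y < w Y :=
        htop.eventually (eventually_lt_nhds (hpos Y))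
      obtain ⟨z, hz1, hz2⟩ := (hev2.and (eventually_ge_atTop Y)).exists
      have := hmono.monotoneOn Set.self_mem_Ici hz2 hz2
      linarith
  -- w 0 = 3/2
  have hw00 : w 0 = 3/2 := by
    have h := hsq 0
    rw [hw0, hE0] at h
    have hp := hpos 0
    have hfac : (w 0)^2 * (2 * w 0 - 3) = 0 := by nlinarith
    rcases mul_eq_zero.mp hfac with h1 | h2
    · exfalso; nlinarith [pow_eq_zero_iff (n := 2) (by norm_num) |>.mp h1]
    · linarith
  -- bounds
  have hwle : ∀ y, w y ≤ 3/2 := by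
    intro y
    have h := hsq y
    rw [hE0] at h
    have hp := hpos y
    by_contra hgt
    push_neg at hgt
    nlinarith [sq_nonneg (deriv w y), mul_pos (mul_pos hp hp) (sub_pos.mpr hgt)]
  have hdwle : ∀ y, |deriv w y| ≤ 3/2 := by
    intro y
    have h := hsq y
    rw [hE0] at h
    have hp := hpos y
    have hle := hwle y
    rw [abs_le]
    constructor <;> nlinarith
  -- Lipschitz field
  set v : ℝ → ℝ × ℝ → ℝ × ℝ := fun _ p => (p.2, p.1 - p.1^2) with hv
  have hlip : ∀ t : ℝ, LipschitzOnWith 4 (v t) (Metric.closedBall (0 : ℝ × ℝ) (3/2)) := by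
    intro t
    rw [lipschitzOnWith_iff_dist_le_mul]
    intro p hp q hq
    simp only [Metric.mem_closedBall, dist_zero_right] at hp hq
    have hp1 : |p.1| ≤ 3/2 := by
      have := (norm_fst_le p).trans hp
      simpa [Real.norm_eq_abs] using this
    have hq1 : |q.1| ≤ 3/2 := by
      have := (norm_fst_le q).trans hq
      simpa [Real.norm_eq_abs] using this
    have hd : dist (v t p) (v t q) = max (dist p.2 q.2) (dist (p.1 - p.1^2) (q.1 - q.1^2)) := by
      rw [hv]; exact Prod.dist_eq
    rw [hd]
    have hK : ((4 : NNReal) : ℝ) = 4 := by norm_num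
    rw [hK]
    have hdnonneg : (0:ℝ) ≤ dist p q := dist_nonneg
    apply max_le
    · have h5 : dist p.2 q.2 ≤ dist p q := by rw [Prod.dist_eq]; exact le_max_right _ _
      linarith
    · have h1 : dist (p.1 - p.1^2) (q.1 - q.1^2) = |(p.1 - q.1) * (1 - (p.1 + q.1))| := by
        rw [Real.dist_eq]; ring_nf
      rw [h1, abs_mul]
      have h2 : |1 - (p.1 + q.1)| ≤ 4 := by
        rw [abs_le] at *
        constructor <;> linarith [hp1.1, hp1.2, hq1.1, hq1.2]
      have h3 : |p.1 - q.1| = dist p.1 q.1 := (Real.dist_eq _ _).symm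
      have h4 : dist p.1 q.1 ≤ dist p q := by rw [Prod.dist_eq]; exact le_max_left _ _
      nlinarith [abs_nonneg (p.1 - q.1)]
  -- the two solutions of the system
  set f : ℝ → ℝ × ℝ := fun t => (w t, deriv w t) with hf
  set g : ℝ → ℝ × ℝ := fun t => (myrho t, myrho' t) with hg
  have hrd : Differentiable ℝ myrho := fun t => (hasDerivAt_myrho t).differentiableAt
  have hrd' : Differentiable ℝ myrho' := fun t => (hasDerivAt_myrho' t).differentiableAt
  intro y
  set T : ℝ := |y| + 1 with hT
  have hTpos : 0 < T := by positivity
  have key : Set.EqOn f g (Set.Icc (-T) T) := by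
    apply ODE_solution_unique_of_mem_Icc (K := 4) (v := v)
      (s := fun _ => Metric.closedBall (0 : ℝ × ℝ) (3/2)) (fun t _ => hlip t)
      (t₀ := 0) (Set.mem_Ioo.mpr ⟨by linarith, hTpos⟩)
    · exact (hw1.continuous.prodMk hwd1.continuous).continuousOn
    · intro t _
      have h2 : deriv (deriv w) t = w t - (w t)^2 := by have := hode t; linarith
      have h1 := (hdw t).prodMk (hdw' t)
      rw [h2] at h1
      exact h1
    · intro t _
      rw [Metric.mem_closedBall, dist_zero_right, hf, Prod.norm_def]
      apply max_le
      · have := hpos t; have := hwle t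
        simp only [Real.norm_eq_abs]
        rw [abs_of_pos (hpos t)]; exact hwle t
      · simpa [Real.norm_eq_abs] using hdwle t
    · exact (hrd.continuous.prodMk hrd'.continuous).continuousOn
    · intro t _
      exact (hasDerivAt_myrho t).prodMk (hasDerivAt_myrho' t)
    · intro t _
      rw [Metric.mem_closedBall, dist_zero_right, hg, Prod.norm_def]
      simp only [Real.norm_eq_abs]
      exact max_le (myrho_bound t).1 (myrho_bound t).2
    · rw [hf, hg]
      have h1 : myrho 0 = 3/2 := by simp [myrho, Real.cosh_zero]
      have h2 : myrho' 0 = 0 := by simp [myrho', Real.sinh_zero]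
      show (w 0, deriv w 0) = (myrho 0, myrho' 0)
      rw [h1, h2, hw00, hw0]
  have hy : y ∈ Set.Icc (-T) T := by
    rw [hT]
    constructor
    · linarith [neg_abs_le y]
    · linarith [le_abs_self y]
  have := key hy
  have hfst : w y = myrho y := congrArg Prod.fst this
  rw [hfst]
  rfl
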